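/- Let x₁, …, x_N be distinct complex numbers, V a finite-dimensional complex vector space, and B ∈ End(V) such that B − x_j is invertible for all j. Then Σ_{i=1}^{N} (∏_{j ≠ i} (B − x_j)/(x_i − x_j)) · (x_i − B)^{-1} = Σ_{i=1}^{N} (x_i − B)^{-1}. -/

import Mathlib

open Polynomial Finset

lemma poly_derivative_finset_prod {ι : Type*} [DecidableEq ι] (s : Finset ι) (f : ι → ℂ[X]) :
    derivative (∏ i ∈ s, f i) = ∑ i ∈ s, (∏ j ∈ s.erase i, f j) * derivative (f i) := by
  classical
  induction s using Finset.induction_on with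
  | empty => simp
  | insert a s hnotmem ih =>
    rw [Finset.prod_insert hnotmem, derivative_mul, Finset.sum_insert hnotmem,
      Finset.erase_insert hnotmem, ih, Finset.mul_sum]
    refine congrArg₂ (· + ·) (mul_comm _ _) (Finset.sum_congr rfl fun i hi => ?_)
    rw [Finset.erase_insert_of_ne (by rintro rfl; exact hnotmem hi),
      Finset.prod_insert (fun h => hnotmem (Finset.mem_of_mem_erase h)), mul_assoc]

theorem lagrange_resolvent_sum
    (V : Type) [AddCommGroup V] [Module ℂ V] [FiniteDimensional ℂ V]
    (N : ℕ) (hN : 1 ≤ N) (x : Fin N → ℂ) (hx : Function.Injective x)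
    (B : Module.End ℂ V)
    (hinv : ∀ j, IsUnit (B - x j • (1 : Module.End ℂ V))) :
    ∑ i : Fin N,
        (Polynomial.aeval B
            (∏ j ∈ Finset.univ.erase i, (C (x i - x j)⁻¹ * (X - C (x j))))) *
          Ring.inverse (x i • (1 : Module.End ℂ V) - B)
      = ∑ i : Fin N, Ring.inverse (x i • (1 : Module.End ℂ V) - B) := by
  classical
  have hInj : Set.InjOn x (univ : Finset (Fin N)) := hx.injOn
  set L : Fin N → ℂ[X] :=
    fun i => ∏ j ∈ Finset.univ.erase i, (C (x i - x j)⁻¹ * (X - C (x j))) with hLdef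
  have hLB : ∀ i, L i = Lagrange.basis univ x i := fun i => rfl
  have hxne : ∀ {i k : Fin N}, i ≠ k → x k - x i ≠ 0 := by
    intro i k hik
    exact sub_ne_zero.mpr (fun hc => hik (hx hc).symm)
  -- the quotient polynomials
  have hex : ∀ i, ∃ q, L i - 1 = (X - C (x i)) * q := by
    intro i
    have : (X - C (x i)) ∣ (L i - 1) := by
      rw [dvd_iff_isRoot]
      simp [IsRoot, hLB i, Lagrange.eval_basis_self hInj (mem_univ i)]
    exact this
  choose h hh using hex
  -- evaluation at other nodes
  have hval_ne : ∀ i k, i ≠ k → (h i).eval (x k) = -(x k - x i)⁻¹ := by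
    intro i k hik
    have h1 := congrArg (eval (x k)) (hh i)
    rw [eval_sub, eval_one, eval_mul, eval_sub, eval_X, eval_C, hLB i,
      Lagrange.eval_basis_of_ne hik (mem_univ k)] at h1
    have hne := hxne hik
    field_simp at h1 ⊢
    linear_combination -h1
  -- evaluation at own node, via derivative
  have hval_self : ∀ k, (h k).eval (x k) = ∑ j ∈ univ.erase k, (x k - x j)⁻¹ := by
    intro k
    have h1 := congrArg derivative (hh k)
    rw [derivative_sub, derivative_one, sub_zero, derivative_mul, derivative_sub,
      derivative_X, derivative_C, sub_zero, one_mul] at h1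
    have h2 := congrArg (eval (x k)) h1
    rw [eval_add, eval_mul, eval_sub, eval_X, eval_C, sub_self, zero_mul, add_zero] at h2
    rw [← h2, hLdef, poly_derivative_finset_prod]
    rw [eval_finset_sum]
    refine Finset.sum_congr rfl fun j hj => ?_
    have hjk : j ≠ k := (mem_erase.mp hj).1
    rw [derivative_mul, derivative_C, zero_mul, derivative_sub, derivative_X, derivative_C,
      sub_zero, mul_one, zero_add, eval_mul, eval_C, eval_prod]
    have : ∀ l ∈ (univ.erase k).erase j,
        eval (x k) (C (x k - x l)⁻¹ * (X - C (x l))) = 1 := by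
      intro l hl
      have hlk : l ≠ k := (mem_erase.mp (mem_of_mem_erase hl)).1
      rw [eval_mul, eval_C, eval_sub, eval_X, eval_C, inv_mul_cancel₀ (hxne hlk)]
    rw [Finset.prod_congr rfl this, Finset.prod_const_one, one_mul]
  -- the sum of the quotients is zero
  set G : ℂ[X] := ∑ i, h i with hGdef
  have hGeval : ∀ k, G.eval (x k) = 0 := by
    intro k
    rw [hGdef, eval_finset_sum, ← Finset.add_sum_erase _ _ (mem_univ k), hval_self k]
    rw [Finset.sum_congr rfl (fun i hi => hval_ne i k (mem_erase.mp hi).1)]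
    rw [← Finset.sum_add_distrib]
    rw [Finset.sum_congr rfl (fun i _ => add_neg_cancel ((x k - x i)⁻¹)),
      Finset.sum_const_zero]
  have hdeg : ∀ i, (h i).natDegree ≤ N - 1 := by
    intro i
    by_cases h0 : h i = 0
    · simp [h0]
    have hnd : (L i - 1).natDegree = 1 + (h i).natDegree := by
      rw [hh i, natDegree_mul (X_sub_C_ne_zero _) h0, natDegree_X_sub_C]
    have h2 : (L i - 1).natDegree ≤ N - 1 := by
      refine (natDegree_sub_le _ _).trans ?_
      rw [hLB i, Lagrange.natDegree_basis hInj (mem_univ i), natDegree_one]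
      simp
    omega
  have hG : G = 0 := by
    refine Polynomial.eq_zero_of_natDegree_lt_card_of_eval_eq_zero G hx hGeval ?_
    have := natDegree_sum_le_of_forall_le univ h (fun i _ => hdeg i)
    rw [Fintype.card_fin, hGdef]
    omega
  -- key operator identity for each term
  have key : ∀ i, (aeval B (L i)) * Ring.inverse (x i • (1 : Module.End ℂ V) - B)
      = Ring.inverse (x i • (1 : Module.End ℂ V) - B) - aeval B (h i) := by
    intro i
    have hu : IsUnit (x i • (1 : Module.End ℂ V) - B) := by
      simpa [neg_sub] using (hinv i).neg
    have e0 : aeval B (X - C (x i)) = -(x i • (1 : Module.End ℂ V) - B) := by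
      rw [map_sub, aeval_X, aeval_C, Algebra.algebraMap_eq_smul_one, neg_sub]
    have e1 : L i = 1 + h i * (X - C (x i)) := by
      rw [mul_comm, ← hh i]; ring
    rw [e1, map_add, map_one, map_mul, e0, add_mul, one_mul, mul_assoc, neg_mul,
      Ring.mul_inverse_cancel _ hu, mul_neg_one, ← sub_eq_add_neg]
  calc ∑ i : Fin N, (aeval B (L i)) * Ring.inverse (x i • (1 : Module.End ℂ V) - B)
      = ∑ i : Fin N, (Ring.inverse (x i • (1 : Module.End ℂ V) - B) - aeval B (h i)) :=
        Finset.sum_congr rfl fun i _ => key i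
    _ = (∑ i : Fin N, Ring.inverse (x i • (1 : Module.End ℂ V) - B)) - aeval B G := by
        rw [Finset.sum_sub_distrib, hGdef, map_sum]
    _ = ∑ i : Fin N, Ring.inverse (x i • (1 : Module.End ℂ V) - B) := by
        rw [hG, map_zero, sub_zero]
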